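/- Let λ > 0, C ≥ 0, T ≤ −1, and let h : (−∞, T] → [0, 1] be differentiable with h'(τ) ≤ −λ h(τ) + C(−τ)^{−1} for all τ ≤ T. Then h(τ) ≤ (C/λ)(−τ)^{−1} for all τ ≤ T. -/

import Mathlib

/-- If `h : (−∞, T] → [0,1]` is differentiable with `h'(τ) ≤ −λ h(τ) + C(−τ)⁻¹` for all
`τ ≤ T ≤ −1`, then `h(τ) ≤ (C/λ)(−τ)⁻¹` for all `τ ≤ T`. -/
theorem stmt10 (l C T : ℝ) (hl : 0 < l) (hC : 0 ≤ C) (hT : T ≤ -1)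
    (h : ℝ → ℝ) (hdiff : ∀ τ ≤ T, DifferentiableAt ℝ h τ)
    (hrange : ∀ τ ≤ T, h τ ∈ Set.Icc (0:ℝ) 1)
    (hineq : ∀ τ ≤ T, deriv h τ ≤ -l * h τ + C * (-τ)⁻¹) :
    ∀ τ ≤ T, h τ ≤ (C / l) * (-τ)⁻¹ := by
  intro τ hτ
  set c : ℝ := C / l with hc_def
  have hc : 0 ≤ c := div_nonneg hC hl.le
  have hlc : l * c = C := by rw [hc_def, mul_div_assoc']; exact mul_div_cancel_left₀ C hl.ne'
  set φ : ℝ → ℝ := fun s => Real.exp (l * s) * (h s - c * (-s)⁻¹) with hφ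
  have hsneg : ∀ s : ℝ, s ≤ T → s < 0 := fun s hs => lt_of_le_of_lt (hs.trans hT) (by norm_num)
  -- derivative of φ
  have hder : ∀ s ≤ T, HasDerivAt φ
      (Real.exp (l * s) * (l * (h s - c * (-s)⁻¹) + (deriv h s - c * (-(-1) / (-s) ^ 2)))) s := by
    intro s hs
    have hs0 : (-s) ≠ 0 := by have := hsneg s hs; linarith
    have h1 : HasDerivAt (fun x : ℝ => Real.exp (l * x)) (Real.exp (l * s) * l) s := by
      have := (Real.hasDerivAt_exp (l * s)).comp s ((hasDerivAt_id s).const_mul l)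
      simp only [mul_one] at this
      exact this
    have h2 : HasDerivAt (fun x : ℝ => (-x)⁻¹) (-(-1) / (-s) ^ 2) s :=
      ((hasDerivAt_id s).neg.inv hs0)
    have h3 : HasDerivAt (fun x : ℝ => h x - c * (-x)⁻¹)
        (deriv h s - c * (-(-1) / (-s) ^ 2)) s :=
      ((hdiff s hs).hasDerivAt).sub (h2.const_mul c)
    have := h1.mul h3
    exact this.congr_deriv (by ring)
  -- the derivative is nonpositive on the interior
  have hderle : ∀ s ≤ T,
      Real.exp (l * s) * (l * (h s - c * (-s)⁻¹) + (deriv h s - c * (-(-1) / (-s) ^ 2))) ≤ 0 := by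
    intro s hs
    have hsn := hsneg s hs
    have hexp : 0 < Real.exp (l * s) := Real.exp_pos _
    have hcineq := hineq s hs
    have hsq : 0 ≤ c * (1 / (-s) ^ 2) := by positivity
    have : l * (h s - c * (-s)⁻¹) + (deriv h s - c * (-(-1) / (-s) ^ 2)) ≤ 0 := by
      have : l * (h s - c * (-s)⁻¹) + (deriv h s - c * (-(-1) / (-s) ^ 2))
          ≤ l * h s - l * c * (-s)⁻¹ + (-l * h s + C * (-s)⁻¹) - c * (1 / (-s) ^ 2) := by
        nlinarith [hcineq]
      rw [hlc] at this
      nlinarith [hsq]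
    exact mul_nonpos_of_nonneg_of_nonpos hexp.le this
  -- φ is antitone on Iic T
  have hanti : AntitoneOn φ (Set.Iic T) := by
    apply antitoneOn_of_deriv_nonpos (convex_Iic T)
    · intro s hs
      exact (hder s hs).continuousAt.continuousWithinAt
    · intro s hs
      rw [interior_Iic] at hs
      exact ((hder s hs.le).differentiableAt).differentiableWithinAt
    · intro s hs
      rw [interior_Iic] at hs
      rw [(hder s hs.le).deriv]
      exact hderle s hs.le
  -- φ τ ≤ exp (l * s) for all s ≤ τ
  have hbound : ∀ s ≤ τ, φ τ ≤ Real.exp (l * s) := by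
    intro s hs
    have hsT : s ≤ T := hs.trans hτ
    have h1 : φ τ ≤ φ s := hanti hsT hτ hs
    have hsn := hsneg s hsT
    have h2 : φ s ≤ Real.exp (l * s) := by
      have hr := hrange s hsT
      have hnn : 0 ≤ c * (-s)⁻¹ := by
        have : (0:ℝ) < -s := by linarith
        positivity
      have : h s - c * (-s)⁻¹ ≤ 1 := by linarith [hr.2]
      calc φ s ≤ Real.exp (l * s) * 1 := by
              exact mul_le_mul_of_nonneg_left this (Real.exp_pos _).le
        _ = Real.exp (l * s) := mul_one _
    linarith
  -- take limit s → -∞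
  have htend : Filter.Tendsto (fun s : ℝ => Real.exp (l * s)) Filter.atBot (nhds 0) := by
    apply Real.tendsto_exp_atBot.comp
    exact Filter.tendsto_atBot_atBot.mpr fun b => ⟨b / l, fun a ha => by
      linarith [(le_div_iff₀ hl).mp ha]⟩
  have hφτ : φ τ ≤ 0 := by
    refine ge_of_tendsto htend ?_
    filter_upwards [Filter.eventually_le_atBot τ] with s hs
    exact hbound s hs
  -- conclude
  have hexp : 0 < Real.exp (l * τ) := Real.exp_pos _
  have : h τ - c * (-τ)⁻¹ ≤ 0 := by
    by_contra hcon
    push_neg at hcon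
    have : 0 < φ τ := mul_pos hexp hcon
    linarith
  linarith
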